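/- Let V₁, V₂ be nonzero subspaces of a finite-dimensional complex inner product space with V₁ ∩ V₂ = {0}. Let δ := the maximum of |⟨v₁, v₂⟩| over unit vectors v₁ ∈ V₁ and v₂ ∈ V₂ (so δ < 1). Let V₂' be the orthogonal complement of V₁ inside V₁ + V₂, let Π₂ and Π₂' denote the orthogonal projections onto V₂ and V₂' respectively, and set σ₂ := Π₂/dim V₂ and σ₂' := Π₂'/dim V₂' (the totally mixed states on V₂ and V₂'). Then the trace norm satisfies ‖σ₂ − σ₂'‖₁ ≤ 2·δ^{1/2}·(1 − δ²)^{−1/4}. -/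

import Mathlib

open scoped ComplexInnerProductSpace

noncomputable def traceNorm {E : Type} [NormedAddCommGroup E] [InnerProductSpace ℂ E]
    [FiniteDimensional ℂ E] (A : E →ₗ[ℂ] E) : ℝ :=
  ∑ i : Fin (Module.finrank ℂ E),
    Real.sqrt ((LinearMap.isSymmetric_adjoint_mul_self A).eigenvalues rfl i)

noncomputable def projOp {E : Type} [NormedAddCommGroup E] [InnerProductSpace ℂ E]
    [FiniteDimensional ℂ E] (K : Submodule ℂ E) : E →ₗ[ℂ] E :=
  K.subtype ∘ₗ (K.orthogonalProjectionOnto : E →ₗ[ℂ] K)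

section Aux
variable {E : Type} [NormedAddCommGroup E] [InnerProductSpace ℂ E] [FiniteDimensional ℂ E]
set_option linter.unusedSectionVars false

lemma trace_eq_sum_inner_onb {ι : Type} [Fintype ι] [DecidableEq ι]
    (b : OrthonormalBasis ι ℂ E) (T : E →ₗ[ℂ] E) :
    LinearMap.trace ℂ E T = ∑ i, ⟪b i, T (b i)⟫ := by
  rw [LinearMap.trace_eq_matrix_trace ℂ b.toBasis, Matrix.trace]
  congr 1; ext i
  rw [Matrix.diag_apply, LinearMap.toMatrix_apply, OrthonormalBasis.coe_toBasis_repr_apply,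
    b.repr_apply_apply, OrthonormalBasis.coe_toBasis]

lemma projOp_apply_mem (K : Submodule ℂ E) (x : E) : projOp K x ∈ K := (K.orthogonalProjectionOnto x).2

lemma projOp_comp_self (K : Submodule ℂ E) : projOp K ∘ₗ projOp K = projOp K := by
  ext x
  simp [projOp, Submodule.orthogonalProjectionOnto_mem_subspace_eq_self,
    Submodule.starProjection_eq_self_iff]

lemma trace_projOp (K : Submodule ℂ E) :
    LinearMap.trace ℂ E (projOp K) = (Module.finrank ℂ K : ℂ) := by
  rw [projOp, LinearMap.trace_comp_comm']
  have : ((K.orthogonalProjectionOnto : E →ₗ[ℂ] K) ∘ₗ K.subtype) = LinearMap.id := by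
    ext x
    simp [Submodule.orthogonalProjectionOnto_mem_subspace_eq_self]
  rw [this, LinearMap.trace_id]

lemma projOp_isSymmetric (K : Submodule ℂ E) : (projOp K).IsSymmetric :=
  fun x y => Submodule.inner_starProjection_left_eq_right (K := K) x y

lemma inner_projOp_self (K : Submodule ℂ E) (v : E) :
    ⟪v, projOp K v⟫ = (‖projOp K v‖ : ℂ) ^ 2 := by
  have h0 : projOp K (projOp K v) = projOp K v :=
    congrFun (congrArg DFunLike.coe (projOp_comp_self K)) v
  calc ⟪v, projOp K v⟫ = ⟪v, projOp K (projOp K v)⟫ := by rw [h0]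
    _ = ⟪projOp K v, projOp K v⟫ := (projOp_isSymmetric K v (projOp K v)).symm
    _ = (‖projOp K v‖ : ℂ) ^ 2 := inner_self_eq_norm_sq_to_K _

lemma trace_comp_projOp (K : Submodule ℂ E) (T : E →ₗ[ℂ] E) :
    LinearMap.trace ℂ E (T ∘ₗ projOp K) =
      ∑ i, ⟪(stdOrthonormalBasis ℂ K i : E), T (stdOrthonormalBasis ℂ K i : E)⟫ := by
  rw [projOp, ← LinearMap.comp_assoc, LinearMap.trace_comp_comm',
    trace_eq_sum_inner_onb (stdOrthonormalBasis ℂ K)]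
  congr 1; ext i
  rw [LinearMap.comp_apply, LinearMap.comp_apply, ContinuousLinearMap.coe_coe,
    Submodule.inner_orthogonalProjectionOnto_eq_of_mem_left]
  rfl

lemma sum_eigenvalues_eq_trace {n : ℕ} (hn : Module.finrank ℂ E = n) {T : E →ₗ[ℂ] E}
    (hT : T.IsSymmetric) :
    (∑ i, ((hT.eigenvalues hn i : ℂ))) = LinearMap.trace ℂ E T := by
  rw [trace_eq_sum_inner_onb (hT.eigenvectorBasis hn)]
  congr 1; ext i
  rw [hT.apply_eigenvectorBasis, inner_smul_right, inner_self_eq_norm_sq_to_K]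
  simp [(hT.eigenvectorBasis hn).orthonormal.1 i]

lemma card_nonzero_le_rank {n : ℕ} (hn : Module.finrank ℂ E = n) {T : E →ₗ[ℂ] E}
    (hT : T.IsSymmetric) :
    (Finset.univ.filter (fun i => hT.eigenvalues hn i ≠ 0)).card
      ≤ Module.finrank ℂ (LinearMap.range T) := by
  classical
  set b := hT.eigenvectorBasis hn with hb
  set μ := hT.eigenvalues hn with hμ
  set s := Finset.univ.filter (fun i => μ i ≠ 0) with hs
  have hTb : ∀ i, T (b i) = (μ i : ℂ) • b i := hT.apply_eigenvectorBasis hn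
  have hind : LinearIndependent ℂ (fun i : s => ((μ (i : Fin n) : ℂ) • b (i : Fin n))) := by
    have h1 : LinearIndependent ℂ (fun i : s => b (i : Fin n)) :=
      b.orthonormal.linearIndependent.comp _ Subtype.val_injective
    have h2 := h1.units_smul (fun i : s => Units.mk0 ((μ (i : Fin n) : ℂ))
      (Complex.ofReal_ne_zero.mpr (Finset.mem_filter.1 i.2).2))
    convert h2 using 1
    ext i; simp [Units.smul_def]
  have hmem : ∀ i : s, ((μ (i : Fin n) : ℂ) • b (i : Fin n)) ∈ LinearMap.range T := fun i =>
    (hTb (i : Fin n)) ▸ LinearMap.mem_range_self T (b (i : Fin n))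
  have hind' : LinearIndependent ℂ (fun i : s =>
      (⟨_, hmem i⟩ : LinearMap.range T)) :=
    LinearIndependent.of_comp (LinearMap.range T).subtype hind
  have := hind'.fintype_card_le_finrank
  simpa using this

lemma eigenvalues_adjoint_mul_self_nonneg (A : E →ₗ[ℂ] E) {n : ℕ}
    (hn : Module.finrank ℂ E = n) (i : Fin n) :
    0 ≤ (LinearMap.isSymmetric_adjoint_mul_self A).eigenvalues hn i := by
  set hS := LinearMap.isSymmetric_adjoint_mul_self A
  set b := hS.eigenvectorBasis hn with hb
  have h2 : ⟪b i, (LinearMap.adjoint A * A) (b i)⟫ = ((hS.eigenvalues hn i : ℝ) : ℂ) := by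
    rw [hS.apply_eigenvectorBasis, inner_smul_right, inner_self_eq_norm_sq_to_K]
    simp [b.orthonormal.1 i]
  have h3 : ⟪b i, (LinearMap.adjoint A * A) (b i)⟫ = ((‖A (b i)‖ ^ 2 : ℝ) : ℂ) := by
    rw [Module.End.mul_apply, LinearMap.adjoint_inner_right, inner_self_eq_norm_sq_to_K]
    norm_cast
  have h4 : ((hS.eigenvalues hn i : ℝ) : ℂ) = ((‖A (b i)‖ ^ 2 : ℝ) : ℂ) := by rw [← h2, h3]
  rw [Complex.ofReal_inj.mp h4]; positivity

end Aux

set_option maxHeartbeats 1000000 in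
theorem mixed_state_perturbation {E : Type} [NormedAddCommGroup E]
    [InnerProductSpace ℂ E] [FiniteDimensional ℂ E]
    (V₁ V₂ : Submodule ℂ E) (hV₁ : V₁ ≠ ⊥) (hV₂ : V₂ ≠ ⊥) (hdisj : V₁ ⊓ V₂ = ⊥)
    (δ : ℝ)
    (hδ : IsGreatest {x : ℝ | ∃ v₁ ∈ V₁, ∃ v₂ ∈ V₂,
        ‖v₁‖ = 1 ∧ ‖v₂‖ = 1 ∧ x = ‖⟪v₁, v₂⟫‖} δ) :
    traceNorm
        (((Module.finrank ℂ V₂ : ℂ))⁻¹ • projOp V₂ -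
          ((Module.finrank ℂ (V₁ᗮ ⊓ (V₁ ⊔ V₂) : Submodule ℂ E) : ℂ))⁻¹ •
            projOp (V₁ᗮ ⊓ (V₁ ⊔ V₂))) ≤
      2 * δ ^ ((1 : ℝ) / 2) * (1 - δ ^ 2) ^ (-(1 : ℝ) / 4) := by
  classical
  set V₂' : Submodule ℂ E := V₁ᗮ ⊓ (V₁ ⊔ V₂) with hV₂'def
  set d : ℕ := Module.finrank ℂ V₂ with hd
  -- dimension of V₂' equals d
  have hd' : Module.finrank ℂ V₂' = d := by
    have hsum : Module.finrank ℂ V₁ + Module.finrank ℂ V₂' =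
        Module.finrank ℂ (V₁ ⊔ V₂ : Submodule ℂ E) :=
      Submodule.finrank_add_inf_finrank_orthogonal (le_sup_left : V₁ ≤ V₁ ⊔ V₂)
    have hsup := Submodule.finrank_sup_add_finrank_inf_eq V₁ V₂
    rw [hdisj, finrank_bot] at hsup
    omega
  have hdpos : 0 < d := by
    rw [hd]
    haveI : Nontrivial V₂ := Submodule.nontrivial_iff_ne_bot.mpr hV₂
    exact Module.finrank_pos
  -- basic facts about δ
  obtain ⟨a, haV₁, bb, hbV₂, ha1, hb1, hab⟩ := hδ.1
  have hδ0 : 0 ≤ δ := hab ▸ norm_nonneg _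
  have hδ1 : δ < 1 := by
    rcases lt_or_eq_of_le (hab ▸ (le_of_le_of_eq (norm_inner_le_norm a bb)
      (by rw [ha1, hb1, mul_one]))) with h | h
    · exact h
    · exfalso
      have ha0 : a ≠ 0 := fun h0 => by simp [h0] at ha1
      have hb0 : bb ≠ 0 := fun h0 => by simp [h0] at hb1
      have : ‖⟪a, bb⟫‖ = ‖a‖ * ‖bb‖ := by rw [ha1, hb1, mul_one, ← hab, ← h]
      obtain ⟨r, hr0, hrb⟩ := (norm_inner_eq_norm_iff ha0 hb0).mp this
      have : bb ∈ V₁ ⊓ V₂ := ⟨hrb ▸ Submodule.smul_mem V₁ r haV₁, hbV₂⟩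
      rw [hdisj, Submodule.mem_bot] at this
      exact hb0 this
  -- key geometric estimate
  have key : ∀ v : E, v ∈ V₂ → ‖v‖ = 1 → 1 - δ ^ 2 ≤ ‖projOp V₂' v‖ ^ 2 := by
    intro v hv hv1
    set u : E := projOp V₁ v with hu
    have huV₁ : u ∈ V₁ := projOp_apply_mem V₁ v
    have hwperp : v - u ∈ V₁ᗮ := Submodule.sub_starProjection_mem_orthogonal (K := V₁) v
    have hwW : v - u ∈ V₁ ⊔ V₂ :=
      Submodule.sub_mem _ (Submodule.mem_sup_right hv) (Submodule.mem_sup_left huV₁)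
    have hwV₂' : v - u ∈ V₂' := ⟨hwperp, hwW⟩
    -- the projection of v onto V₂' is v - u
    have hproj : projOp V₂' v = v - u := by
      have huperp : u ∈ V₂'ᗮ := by
        have h1 : V₂' ≤ V₁ᗮ := inf_le_left
        have h2 : V₁ᗮᗮ ≤ V₂'ᗮ := Submodule.orthogonal_le h1
        exact h2 (by rw [Submodule.orthogonal_orthogonal]; exact huV₁)
      have : (V₂'.orthogonalProjectionOnto v : E) = v - u :=
        Submodule.eq_starProjection_of_mem_orthogonal hwV₂' (by simpa using huperp)
      simpa [projOp] using this
    -- ‖u‖ ≤ δ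
    have hule : ‖u‖ ≤ δ := by
      by_cases hu0 : u = 0
      · simpa [hu0] using hδ0
      · have hn0 : ‖u‖ ≠ 0 := norm_ne_zero_iff.mpr hu0
        set v₁ : E := ((‖u‖⁻¹ : ℝ) : ℂ) • u with hv₁def
        have hv₁V₁ : v₁ ∈ V₁ := Submodule.smul_mem V₁ _ huV₁
        have hv₁1 : ‖v₁‖ = 1 := by
          rw [hv₁def, norm_smul, Complex.norm_real, Real.norm_eq_abs,
            abs_of_nonneg (inv_nonneg.mpr (norm_nonneg u)), inv_mul_cancel₀ hn0]
        have hmem : ‖⟪v₁, v⟫‖ ∈ {x : ℝ | ∃ w₁ ∈ V₁, ∃ w₂ ∈ V₂,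
            ‖w₁‖ = 1 ∧ ‖w₂‖ = 1 ∧ x = ‖⟪w₁, w₂⟫‖} := ⟨v₁, hv₁V₁, v, hv, hv₁1, hv1, rfl⟩
        have hle := hδ.2 hmem
        have hinner : ⟪v₁, v⟫ = ((‖u‖⁻¹ : ℝ) : ℂ) * ((‖u‖ : ℝ) : ℂ) ^ 2 := by
          rw [hv₁def, inner_smul_left]
          have : ⟪u, v⟫ = ((‖u‖ : ℝ) : ℂ) ^ 2 := by
            rw [← inner_conj_symm, hu, inner_projOp_self]
            simp [sq]
          rw [this]
          simp
        have : ‖⟪v₁, v⟫‖ = ‖u‖ := by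
          rw [hinner]
          rw [show ((‖u‖⁻¹ : ℝ) : ℂ) * ((‖u‖ : ℝ) : ℂ) ^ 2 = ((‖u‖⁻¹ * ‖u‖ ^ 2 : ℝ) : ℂ) by
            push_cast; ring]
          rw [Complex.norm_real, Real.norm_eq_abs, abs_of_nonneg (by positivity)]
          field_simp
        rw [this] at hle
        exact hle
    -- pythagoras
    have horth : ⟪u, v - u⟫ = 0 := hwperp u huV₁
    have hpyth : ‖u‖ ^ 2 + ‖v - u‖ ^ 2 = 1 := by
      have := norm_add_sq_eq_norm_sq_add_norm_sq_of_inner_eq_zero u (v - u) horth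
      rw [add_sub_cancel, hv1] at this
      rw [pow_two, pow_two]
      linarith
    have hu2 : ‖u‖ ^ 2 ≤ δ ^ 2 := by
      apply sq_le_sq' _ hule
      have : 0 ≤ ‖u‖ := norm_nonneg u
      linarith
    rw [hproj]
    nlinarith [hpyth]
  -- now the trace-norm estimate
  set P : E →ₗ[ℂ] E := projOp V₂ with hP
  set P' : E →ₗ[ℂ] E := projOp V₂' with hP'
  rw [hd']
  set c : ℂ := ((d : ℕ) : ℂ)⁻¹ with hc
  set A : E →ₗ[ℂ] E := c • P - c • P' with hAdef
  have hdC : ((d : ℕ) : ℂ) ≠ 0 := Nat.cast_ne_zero.mpr hdpos.ne'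
  have hcc : (starRingEnd ℂ) c = c := by
    rw [hc, map_inv₀, map_natCast]
  have hAsym : A.IsSymmetric := by
    intro x y
    simp only [hAdef, LinearMap.sub_apply, LinearMap.smul_apply, inner_sub_left, inner_sub_right,
      inner_smul_left, inner_smul_right, hcc]
    rw [projOp_isSymmetric V₂ x y, projOp_isSymmetric V₂' x y]
  have hadj : LinearMap.adjoint A = A := by
    have := (LinearMap.isSymmetric_iff_isSelfAdjoint A).mp hAsym
    rw [← LinearMap.star_eq_adjoint]
    exact this.star_eq
  have hAA : LinearMap.adjoint A * A = A ∘ₗ A := by rw [hadj]; rfl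
  set hS := LinearMap.isSymmetric_adjoint_mul_self A with hhS
  set μ : Fin (Module.finrank ℂ E) → ℝ := hS.eigenvalues rfl with hμ
  have hμ0 : ∀ i, 0 ≤ μ i := fun i => eigenvalues_adjoint_mul_self_nonneg A rfl i
  set τ : ℝ := ∑ i, ‖P' ((stdOrthonormalBasis ℂ V₂ i : E))‖ ^ 2 with hτ
  have hτge : (d : ℝ) * (1 - δ ^ 2) ≤ τ := by
    have h := Finset.card_nsmul_le_sum Finset.univ
      (fun i => ‖P' ((stdOrthonormalBasis ℂ V₂ i : E))‖ ^ 2) (1 - δ ^ 2)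
      (fun i _ => key _ (Submodule.coe_mem _)
        (by rw [Submodule.norm_coe]; exact (stdOrthonormalBasis ℂ V₂).orthonormal.1 i))
    simpa [nsmul_eq_mul, hd] using h
  -- trace computations
  have htrPP : LinearMap.trace ℂ E (P ∘ₗ P) = ((d : ℕ) : ℂ) := by
    rw [hP, projOp_comp_self, trace_projOp, ← hd]
  have htrP'P' : LinearMap.trace ℂ E (P' ∘ₗ P') = ((d : ℕ) : ℂ) := by
    rw [hP', projOp_comp_self, trace_projOp, hd']
  have htrP'P : LinearMap.trace ℂ E (P' ∘ₗ P) = ((τ : ℝ) : ℂ) := by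
    rw [hP, hP', trace_comp_projOp V₂ (projOp V₂')]
    have hterm : ∀ i : Fin (Module.finrank ℂ V₂),
        ⟪((stdOrthonormalBasis ℂ V₂ i : E)), projOp V₂' ((stdOrthonormalBasis ℂ V₂ i : E))⟫
          = ((‖projOp V₂' ((stdOrthonormalBasis ℂ V₂ i : E))‖ ^ 2 : ℝ) : ℂ) := fun i => by
      rw [inner_projOp_self]; norm_cast
    rw [Finset.sum_congr rfl (fun i _ => hterm i)]
    rw [hτ]
    norm_cast
  have htrPP' : LinearMap.trace ℂ E (P ∘ₗ P') = ((τ : ℝ) : ℂ) := by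
    rw [LinearMap.trace_comp_comm', htrP'P]
  have hcomp : A ∘ₗ A = (c * c) • ((P ∘ₗ P) - (P ∘ₗ P') - (P' ∘ₗ P) + (P' ∘ₗ P')) := by
    ext x
    simp only [hAdef, LinearMap.comp_apply, LinearMap.sub_apply, LinearMap.smul_apply,
      LinearMap.add_apply, map_sub, map_smul, smul_sub, smul_add, smul_smul]
    module
  have htrace : LinearMap.trace ℂ E (LinearMap.adjoint A * A)
      = (c * c) * (2 * ((d : ℕ) : ℂ) - 2 * ((τ : ℝ) : ℂ)) := by
    rw [hAA, hcomp, map_smul, smul_eq_mul]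
    rw [map_add, map_sub, map_sub, htrPP, htrPP', htrP'P, htrP'P']
    ring
  have hμsum : ∑ i, μ i = (2 * (d : ℝ) - 2 * τ) / (d : ℝ) ^ 2 := by
    apply Complex.ofReal_inj.mp
    have h5 : ((∑ i, μ i : ℝ) : ℂ) = (c * c) * (2 * ((d : ℕ) : ℂ) - 2 * ((τ : ℝ) : ℂ)) := by
      have h5' := sum_eigenvalues_eq_trace (T := LinearMap.adjoint A * A) rfl hS
      rw [htrace] at h5'
      rw [← h5']
      push_cast
      rfl
    have hd2 : ((d : ℕ) : ℂ) ^ 2 ≠ 0 := pow_ne_zero 2 hdC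
    rw [h5, hc]
    push_cast
    rw [eq_div_iff hd2]
    field_simp
  have hμsumle : ∑ i, μ i ≤ 2 * δ ^ 2 / (d : ℝ) := by
    rw [hμsum]
    rw [div_le_div_iff₀ (by positivity) (by positivity : (0:ℝ) < (d:ℝ))]
    nlinarith [hτge, sq_nonneg ((d:ℝ))]
  -- rank bound
  set s : Finset (Fin (Module.finrank ℂ E)) := Finset.univ.filter (fun i => μ i ≠ 0) with hsdef
  have hcard : s.card ≤ 2 * d := by
    have h1 : s.card ≤ Module.finrank ℂ (LinearMap.range (LinearMap.adjoint A * A)) :=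
      card_nonzero_le_rank rfl hS
    have h2 : LinearMap.range (LinearMap.adjoint A * A) ≤ V₂ ⊔ V₂' := by
      rintro x ⟨y, rfl⟩
      rw [hAA]
      have hmem : ∀ z : E, A z ∈ V₂ ⊔ V₂' := fun z => by
        rw [hAdef]
        exact Submodule.sub_mem _
          (Submodule.mem_sup_left (Submodule.smul_mem _ _ (projOp_apply_mem V₂ z)))
          (Submodule.mem_sup_right (Submodule.smul_mem _ _ (projOp_apply_mem V₂' z)))
      exact hmem _
    have h3 : Module.finrank ℂ (LinearMap.range (LinearMap.adjoint A * A))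
        ≤ Module.finrank ℂ (V₂ ⊔ V₂' : Submodule ℂ E) := Submodule.finrank_mono h2
    have h4 := Submodule.finrank_sup_add_finrank_inf_eq V₂ V₂'
    omega
  -- Cauchy-Schwarz
  have htn : traceNorm A = ∑ i ∈ s, Real.sqrt (μ i) := by
    have h0 : traceNorm A = ∑ i, Real.sqrt (μ i) := rfl
    rw [h0]
    refine (Finset.sum_subset (Finset.filter_subset _ _) ?_).symm
    intro i _ hi
    simp only [hsdef, Finset.mem_filter, Finset.mem_univ, true_and, ne_eq, not_not] at hi
    rw [hi, Real.sqrt_zero]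
  have htn0 : 0 ≤ traceNorm A := by
    rw [htn]; exact Finset.sum_nonneg fun i _ => Real.sqrt_nonneg _
  have hCS := Finset.sum_mul_sq_le_sq_mul_sq s (fun _ => (1 : ℝ)) (fun i => Real.sqrt (μ i))
  simp only [one_mul, one_pow, Finset.sum_const, smul_eq_mul, nsmul_eq_mul, mul_one] at hCS
  have hsq : ∀ i ∈ s, Real.sqrt (μ i) ^ 2 = μ i := fun i _ => Real.sq_sqrt (hμ0 i)
  rw [Finset.sum_congr rfl hsq] at hCS
  have hssub : ∑ i ∈ s, μ i ≤ ∑ i, μ i :=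
    Finset.sum_le_sum_of_subset_of_nonneg (Finset.filter_subset _ _) fun i _ _ => hμ0 i
  have htn2δ : traceNorm A ≤ 2 * δ := by
    have hb1 : (traceNorm A) ^ 2 ≤ (s.card : ℝ) * ∑ i ∈ s, μ i := by
      rw [htn]; exact hCS
    have hb2 : (s.card : ℝ) * ∑ i ∈ s, μ i ≤ (2 * d : ℝ) * (2 * δ ^ 2 / (d : ℝ)) := by
      have h₁ : (s.card : ℝ) ≤ (2 * d : ℝ) := by exact_mod_cast hcard
      have h₃ : 0 ≤ ∑ i ∈ s, μ i := Finset.sum_nonneg fun j _ => hμ0 j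
      exact mul_le_mul h₁ (hssub.trans hμsumle) h₃ (by positivity)
    have hb3 : (2 * d : ℝ) * (2 * δ ^ 2 / (d : ℝ)) = (2 * δ) ^ 2 := by
      field_simp
    have : (traceNorm A) ^ 2 ≤ (2 * δ) ^ 2 := by
      calc (traceNorm A) ^ 2 ≤ (s.card : ℝ) * ∑ i ∈ s, μ i := hb1
        _ ≤ (2 * d : ℝ) * (2 * δ ^ 2 / (d : ℝ)) := hb2
        _ = (2 * δ) ^ 2 := hb3
    calc traceNorm A = Real.sqrt ((traceNorm A) ^ 2) := (Real.sqrt_sq htn0).symm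
      _ ≤ Real.sqrt ((2 * δ) ^ 2) := Real.sqrt_le_sqrt this
      _ = 2 * δ := Real.sqrt_sq (by positivity)
  -- final numeric step
  refine htn2δ.trans ?_
  have hbase : 0 < 1 - δ ^ 2 := by nlinarith
  have hx : δ = δ ^ ((1:ℝ)/2) * δ ^ ((1:ℝ)/2) := by
    rw [← Real.rpow_add' hδ0 (by norm_num)]
    norm_num
  have hone : (1 : ℝ) ≤ (1 - δ ^ 2) ^ (-(1:ℝ)/4) :=
    Real.one_le_rpow_of_pos_of_le_one_of_nonpos hbase (by nlinarith) (by norm_num)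
  have hhalf : δ ^ ((1:ℝ)/2) ≤ (1 - δ ^ 2) ^ (-(1:ℝ)/4) :=
    (Real.rpow_le_one hδ0 hδ1.le (by norm_num)).trans hone
  calc 2 * δ = 2 * (δ ^ ((1:ℝ)/2) * δ ^ ((1:ℝ)/2)) := by rw [← hx]
    _ ≤ 2 * (δ ^ ((1:ℝ)/2) * (1 - δ ^ 2) ^ (-(1:ℝ)/4)) := by
        have := mul_le_mul_of_nonneg_left hhalf (Real.rpow_nonneg hδ0 ((1:ℝ)/2))
        linarith
    _ = 2 * δ ^ ((1:ℝ)/2) * (1 - δ ^ 2) ^ (-(1:ℝ)/4) := by ring
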